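/- Let μ ≥ −((N−2)/2)^2 be a real number, α = (N−2)/2 − √(((N−2)/2)^2 + μ), and let m ∈ N. Define the polynomial P(t) = Σ_{i=0}^{m} ((−m)_i / ((N/2 − α)_i)) t^i / i!, where (s)_i denotes the Pochhammer symbol. Then the function φ(r) = r^{−α} P(r^2/4) solves on (0,∞) the ODE φ'' + ((N−1)/r − r/2) φ' + (γ − μ/r^2) φ = 0, where γ = m − α/2. -/

import Mathlib

open Real Set Finset

noncomputable section

namespace RadialAux

def c (m : ℕ) (b : ℝ) (i : ℕ) : ℝ :=
  (ascPochhammer ℝ i).eval (-(m : ℝ)) / (ascPochhammer ℝ i).eval b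

def Pk (m : ℕ) (b : ℝ) (k : ℕ) (t : ℝ) : ℝ :=
  ∑ i ∈ Finset.range (m + 1), c m b (i + k) * t ^ i / (Nat.factorial i : ℝ)

lemma czero (m : ℕ) (b : ℝ) {j : ℕ} (hj : m + 1 ≤ j) : c m b j = 0 := by
  have h : (ascPochhammer ℝ j).eval (-(m : ℝ)) = 0 :=
    ascPochhammer_eval_neg_coe_nat_of_lt (by omega)
  simp [c, h]

lemma hrec (m : ℕ) {b : ℝ} (hb : 0 < b) (j : ℕ) :
    (b + j) * c m b (j + 1) = ((j : ℝ) - m) * c m b j := by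
  have h1 : (ascPochhammer ℝ j).eval b ≠ 0 := (ascPochhammer_pos j b hb).ne'
  have h2 : b + (j : ℝ) ≠ 0 := by positivity
  simp only [c, ascPochhammer_succ_eval]
  field_simp
  ring

lemma key (m : ℕ) {b : ℝ} (hb : 0 < b) (t : ℝ) :
    t * Pk m b 2 t + (b - t) * Pk m b 1 t + (m : ℝ) * Pk m b 0 t = 0 := by
  have h0 : (∑ j ∈ Finset.range (m + 2), c m b j * t ^ j / (Nat.factorial j : ℝ))
      = Pk m b 0 t := by
    rw [Finset.sum_range_succ, czero m b (le_refl (m + 1))]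
    simp [Pk]
  have h1 : (∑ j ∈ Finset.range (m + 2), c m b (j + 1) * t ^ j / (Nat.factorial j : ℝ))
      = Pk m b 1 t := by
    rw [Finset.sum_range_succ, czero m b (show m + 1 ≤ m + 1 + 1 by omega)]
    simp [Pk]
  have h2 : (∑ j ∈ Finset.range (m + 2), (j : ℝ) * c m b (j + 1) * t ^ j / (Nat.factorial j : ℝ))
      = t * Pk m b 2 t := by
    rw [Finset.sum_range_succ']
    rw [Pk, Finset.mul_sum]
    simp only [Nat.cast_zero, zero_mul, mul_zero, zero_div, add_zero, Nat.cast_ofNat]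
    refine Finset.sum_congr rfl fun i _ => ?_
    have hf : ((Nat.factorial i : ℝ)) ≠ 0 := Nat.cast_ne_zero.mpr (Nat.factorial_ne_zero i)
    have : i + 1 + 1 = i + 2 := rfl
    rw [this, Nat.factorial_succ]
    push_cast
    field_simp
    ring
  have h3 : (∑ j ∈ Finset.range (m + 2), (j : ℝ) * c m b j * t ^ j / (Nat.factorial j : ℝ))
      = t * Pk m b 1 t := by
    rw [Finset.sum_range_succ']
    rw [Pk, Finset.mul_sum]
    simp only [Nat.cast_zero, zero_mul, mul_zero, zero_div, add_zero]
    refine Finset.sum_congr rfl fun i _ => ?_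
    have hf : ((Nat.factorial i : ℝ)) ≠ 0 := Nat.cast_ne_zero.mpr (Nat.factorial_ne_zero i)
    rw [Nat.factorial_succ]
    push_cast
    field_simp
    ring
  have expand : t * Pk m b 2 t + (b - t) * Pk m b 1 t + (m : ℝ) * Pk m b 0 t
      = (∑ j ∈ Finset.range (m + 2), (j : ℝ) * c m b (j + 1) * t ^ j / (Nat.factorial j : ℝ))
        + b * (∑ j ∈ Finset.range (m + 2), c m b (j + 1) * t ^ j / (Nat.factorial j : ℝ))
        - (∑ j ∈ Finset.range (m + 2), (j : ℝ) * c m b j * t ^ j / (Nat.factorial j : ℝ))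
        + (m : ℝ) * (∑ j ∈ Finset.range (m + 2), c m b j * t ^ j / (Nat.factorial j : ℝ)) := by
    rw [h2, h3, h1, h0]; ring
  rw [expand, Finset.mul_sum, Finset.mul_sum, ← Finset.sum_add_distrib,
    ← Finset.sum_sub_distrib, ← Finset.sum_add_distrib]
  refine Finset.sum_eq_zero fun j _ => ?_
  linear_combination (t ^ j / (Nat.factorial j : ℝ)) * hrec m hb j

lemma hasDeriv (m : ℕ) (b : ℝ) (k : ℕ) (t : ℝ) :
    HasDerivAt (Pk m b k) (Pk m b (k + 1) t) t := by
  have h : HasDerivAt (fun t : ℝ => ∑ i ∈ Finset.range (m + 1),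
        c m b (i + k) * t ^ i / (Nat.factorial i : ℝ))
      (∑ i ∈ Finset.range (m + 1),
        c m b (i + k) * ((i : ℝ) * t ^ (i - 1)) / (Nat.factorial i : ℝ)) t := by
    apply HasDerivAt.fun_sum
    intro i _
    exact ((hasDerivAt_pow i t).const_mul (c m b (i + k))).div_const _
  have heq : (∑ i ∈ Finset.range (m + 1),
        c m b (i + k) * ((i : ℝ) * t ^ (i - 1)) / (Nat.factorial i : ℝ))
      = Pk m b (k + 1) t := by
    rw [Finset.sum_range_succ']
    rw [Pk, Finset.sum_range_succ, czero m b (show m + 1 ≤ m + (k + 1) by omega)]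
    simp only [Nat.cast_zero, zero_mul, mul_zero, zero_div, add_zero, Nat.add_sub_cancel,
      Nat.cast_succ, zero_add]
    refine Finset.sum_congr rfl fun i _ => ?_
    have hf : ((Nat.factorial i : ℝ)) ≠ 0 := Nat.cast_ne_zero.mpr (Nat.factorial_ne_zero i)
    have hidx : i + 1 + k = i + (k + 1) := by omega
    rw [hidx, Nat.factorial_succ]
    push_cast
    field_simp
  exact heq ▸ h

end RadialAux

open RadialAux

/-- Let `μ ≥ -((N-2)/2)²`, `α = (N-2)/2 - √(((N-2)/2)² + μ)`, `m ∈ ℕ`, `γ = m - α/2`, and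
`P(t) = Σ_{i=0}^m ((-m)_i/((N/2-α)_i)) tⁱ/i!` (Pochhammer symbols).  Then
`φ(r) = r^{-α} P(r²/4)` solves `φ'' + ((N-1)/r - r/2) φ' + (γ - μ/r²) φ = 0` on `(0,∞)`. -/

theorem radial_ode_solution {N : ℕ} (hN : 3 ≤ N) (μ : ℝ)
    (hμ : -((((N : ℝ) - 2) / 2) ^ 2) ≤ μ)
    (α : ℝ) (hα : α = ((N : ℝ) - 2) / 2 - Real.sqrt ((((N : ℝ) - 2) / 2) ^ 2 + μ))
    (m : ℕ) (γ : ℝ) (hγ : γ = (m : ℝ) - α / 2)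
    (P : ℝ → ℝ)
    (hP : ∀ s : ℝ, P s = ∑ i ∈ Finset.range (m + 1),
      ((ascPochhammer ℝ i).eval (-(m : ℝ)) / (ascPochhammer ℝ i).eval ((N : ℝ) / 2 - α))
        * s ^ i / (Nat.factorial i : ℝ))
    (φ : ℝ → ℝ) (hφ : ∀ r : ℝ, 0 < r → φ r = r ^ (-α) * P (r ^ 2 / 4)) :
    ∀ r : ℝ, 0 < r →
      deriv (deriv φ) r + (((N : ℝ) - 1) / r - r / 2) * deriv φ r
        + (γ - μ / r ^ 2) * φ r = 0 := by
  intro r hr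
  set b : ℝ := (N : ℝ) / 2 - α with hbdef
  have hN3 : (3 : ℝ) ≤ (N : ℝ) := by exact_mod_cast hN
  have hs0 : 0 ≤ Real.sqrt ((((N : ℝ) - 2) / 2) ^ 2 + μ) := Real.sqrt_nonneg _
  have hb : (0 : ℝ) < b := by rw [hbdef, hα]; linarith
  have harg : (0 : ℝ) ≤ (((N : ℝ) - 2) / 2) ^ 2 + μ := by linarith
  have hsq := Real.sq_sqrt harg
  have hμα : α ^ 2 - ((N : ℝ) - 2) * α = μ := by
    rw [hα]; linear_combination hsq
  have hPeq : ∀ t : ℝ, P t = Pk m b 0 t := by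
    intro t
    rw [hP t]
    refine Finset.sum_congr rfl fun i _ => ?_
    simp [RadialAux.c, Pk]
  -- auxiliary derivative facts
  have hsq' : ∀ x : ℝ, HasDerivAt (fun y : ℝ => y ^ 2 / 4) (x / 2) x := by
    intro x
    have h := (hasDerivAt_pow 2 x).div_const 4
    refine h.congr_deriv ?_
    push_cast; ring
  have hQ : ∀ (k : ℕ) (x : ℝ),
      HasDerivAt (fun y : ℝ => Pk m b k (y ^ 2 / 4)) (Pk m b (k + 1) (x ^ 2 / 4) * (x / 2)) x :=
    fun k x => by have := (hasDeriv m b k (x ^ 2 / 4)).comp x (hsq' x); exact this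
  have hrp : ∀ (p : ℝ) (x : ℝ), 0 < x →
      HasDerivAt (fun y : ℝ => y ^ p) (p * x ^ (p - 1)) x :=
    fun p x hx => Real.hasDerivAt_rpow_const (Or.inl hx.ne')
  set ψ₁ : ℝ → ℝ := fun x => -α * x ^ (-α - 1) * Pk m b 0 (x ^ 2 / 4)
      + x ^ (-α) * (Pk m b 1 (x ^ 2 / 4) * (x / 2)) with hψ₁def
  have hψd : ∀ x : ℝ, 0 < x →
      HasDerivAt (fun y : ℝ => y ^ (-α) * Pk m b 0 (y ^ 2 / 4)) (ψ₁ x) x := by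
    intro x hx
    have h1 : HasDerivAt (fun y : ℝ => y ^ (-α)) (-α * x ^ (-α - 1)) x := hrp (-α) x hx
    exact h1.mul (hQ 0 x)
  have hφ' : Set.EqOn φ (fun y : ℝ => y ^ (-α) * Pk m b 0 (y ^ 2 / 4)) (Ioi 0) := by
    intro x hx
    rw [hφ x hx, hPeq]
  have hdφ : Set.EqOn (deriv φ) ψ₁ (Ioi 0) := by
    intro x hx
    have hev : φ =ᶠ[nhds x] (fun y : ℝ => y ^ (-α) * Pk m b 0 (y ^ 2 / 4)) :=
      Filter.eventuallyEq_of_mem (isOpen_Ioi.mem_nhds hx) hφ'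
    rw [hev.deriv_eq, (hψd x hx).deriv]
  have hd1 : deriv φ r = ψ₁ r := hdφ hr
  -- second derivative
  have hψ₁d : HasDerivAt ψ₁
      ((-α * ((-α - 1) * r ^ (-α - 1 - 1)) * Pk m b 0 (r ^ 2 / 4)
        + -α * r ^ (-α - 1) * (Pk m b 1 (r ^ 2 / 4) * (r / 2)))
       + (-α * r ^ (-α - 1) * (Pk m b 1 (r ^ 2 / 4) * (r / 2))
        + r ^ (-α) * (Pk m b 2 (r ^ 2 / 4) * (r / 2) * (r / 2)
            + Pk m b 1 (r ^ 2 / 4) * (1 / 2)))) r := by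
    have hA : HasDerivAt (fun y : ℝ => -α * y ^ (-α - 1)) (-α * ((-α - 1) * r ^ (-α - 1 - 1))) r :=
      (hrp (-α - 1) r hr).const_mul (-α)
    have hhalf : HasDerivAt (fun y : ℝ => y / 2) (1 / 2) r := (hasDerivAt_id r).div_const 2
    have hB : HasDerivAt (fun y : ℝ => Pk m b 1 (y ^ 2 / 4) * (y / 2))
        (Pk m b 2 (r ^ 2 / 4) * (r / 2) * (r / 2) + Pk m b 1 (r ^ 2 / 4) * (1 / 2)) r :=
      (hQ 1 r).mul hhalf
    exact (hA.mul (hQ 0 r)).add ((hrp (-α) r hr).mul hB)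
  have hd2 : deriv (deriv φ) r
      = (-α * ((-α - 1) * r ^ (-α - 1 - 1)) * Pk m b 0 (r ^ 2 / 4)
        + -α * r ^ (-α - 1) * (Pk m b 1 (r ^ 2 / 4) * (r / 2)))
       + (-α * r ^ (-α - 1) * (Pk m b 1 (r ^ 2 / 4) * (r / 2))
        + r ^ (-α) * (Pk m b 2 (r ^ 2 / 4) * (r / 2) * (r / 2)
            + Pk m b 1 (r ^ 2 / 4) * (1 / 2))) := by
    have hev : deriv φ =ᶠ[nhds r] ψ₁ :=
      Filter.eventuallyEq_of_mem (isOpen_Ioi.mem_nhds hr) hdφ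
    rw [hev.deriv_eq, hψ₁d.deriv]
  -- rpow simplifications
  have e1 : r ^ (-α - 1) = r ^ (-α) / r := by
    rw [Real.rpow_sub hr, Real.rpow_one]
  have e2 : r ^ (-α - 1 - 1) = r ^ (-α) / r / r := by
    rw [Real.rpow_sub hr (-α - 1) 1, Real.rpow_one, e1]
  rw [hd2, hd1, hφ r hr, hPeq, hψ₁def]
  simp only [e1, e2]
  have hkey := key m hb (r ^ 2 / 4)
  have hr' : r ≠ 0 := hr.ne'
  have hsplit :
      (-α * ((-α - 1) * (r ^ (-α) / r / r)) * Pk m b 0 (r ^ 2 / 4)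
        + -α * (r ^ (-α) / r) * (Pk m b 1 (r ^ 2 / 4) * (r / 2)))
       + (-α * (r ^ (-α) / r) * (Pk m b 1 (r ^ 2 / 4) * (r / 2))
        + r ^ (-α) * (Pk m b 2 (r ^ 2 / 4) * (r / 2) * (r / 2)
            + Pk m b 1 (r ^ 2 / 4) * (1 / 2)))
      + (((N : ℝ) - 1) / r - r / 2)
          * (-α * (r ^ (-α) / r) * Pk m b 0 (r ^ 2 / 4)
            + r ^ (-α) * (Pk m b 1 (r ^ 2 / 4) * (r / 2)))
      + (γ - μ / r ^ 2) * (r ^ (-α) * Pk m b 0 (r ^ 2 / 4))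
      = r ^ (-α) * (r ^ 2 / 4 * Pk m b 2 (r ^ 2 / 4)
          + (b - r ^ 2 / 4) * Pk m b 1 (r ^ 2 / 4) + (m : ℝ) * Pk m b 0 (r ^ 2 / 4))
        + (r ^ (-α) / r ^ 2) * Pk m b 0 (r ^ 2 / 4)
            * ((α ^ 2 - ((N : ℝ) - 2) * α) - μ) := by
    rw [hγ, hbdef]
    field_simp
    ring
  rw [hsplit, hkey, hμα]
  ring
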